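/- Let f : X → X be a continuous map on a compact metric space X with h_top(f) < +∞ and let φ ∈ C(X). Suppose that for each t > 0 one chooses ν_t ∈ 𝒫_f(X) satisfying P_top(f, tφ) = 𝔥_{ν_t}(f) + t ∫ φ dν_t. If t_k → +∞ and ν_{t_k} converges in the weak* topology to ν_∞ ∈ 𝒫_f(X), then (a) ∫ φ dν_∞ = max_{μ ∈ 𝒫_f(X)} ∫ φ dμ and (b) lim_{k→∞} 𝔥_{ν_{t_k}}(f) = 𝔥_{ν_∞}(f). -/

import Mathlib

open MeasureTheory Filter Topology

/-- `dynPn f φ n ε` is the supremum, over all `(n,ε)`-separated finite subsets `E` of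
`X`, of `∑_{x ∈ E} exp (Sₙφ(x))`, where `Sₙφ(x) = ∑_{j=0}^{n} φ(f^j x)` and `E` is
`(n,ε)`-separated when any two distinct points of `E` are `ε`-apart in some iterate
`f^j`, `0 ≤ j ≤ n`. -/
noncomputable def dynPn {X : Type*} [MetricSpace X] (f : X → X) (φ : C(X, ℝ))
    (n : ℕ) (ε : ℝ) : ℝ :=
  sSup { r : ℝ | ∃ E : Finset X,
    (∀ x ∈ E, ∀ z ∈ E, x ≠ z → ∃ j ≤ n, ε ≤ dist (f^[j] x) (f^[j] z)) ∧
    r = ∑ x ∈ E, Real.exp (∑ j ∈ Finset.range (n + 1), φ (f^[j] x)) }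

/-- The topological pressure `P_top(f,φ)`, as the limit as `ε → 0⁺` (equivalently, by
monotonicity in `ε`, the supremum over `ε > 0`) of `limsup_n (1/n) log dynPn f φ n ε`,
valued in `EReal`. -/
noncomputable def Ptop {X : Type*} [MetricSpace X] (f : X → X) (φ : C(X, ℝ)) : EReal :=
  ⨆ ε : { e : ℝ // 0 < e },
    Filter.atTop.limsup (fun n : ℕ => ((Real.log (dynPn f φ n (ε : ℝ)) / n : ℝ) : EReal))

/-- The entropy-like map `𝔥_μ(f) = inf_{φ ∈ C(X)} { P_top(f,φ) − ∫ φ dμ }`. -/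
noncomputable def dynEnt {X : Type*} [MetricSpace X] [MeasurableSpace X]
    (f : X → X) (μ : ProbabilityMeasure X) : EReal :=
  ⨅ φ : C(X, ℝ), (Ptop f φ - ((∫ x, φ x ∂(μ : Measure X) : ℝ) : EReal))

open Metric in
lemma dynPn_set_bddAbove {X : Type*} [MetricSpace X] [CompactSpace X]
    (f : X → X) (φ : C(X, ℝ)) (n : ℕ) {ε : ℝ} (hε : 0 < ε) :
    BddAbove { r : ℝ | ∃ E : Finset X,
      (∀ x ∈ E, ∀ z ∈ E, x ≠ z → ∃ j ≤ n, ε ≤ dist (f^[j] x) (f^[j] z)) ∧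
      r = ∑ x ∈ E, Real.exp (∑ j ∈ Finset.range (n + 1), φ (f^[j] x)) } := by
  set F : X → (Fin (n+1) → X) := fun x j => f^[(j : ℕ)] x with hF
  obtain ⟨t, -, htfin, htcov⟩ :=
    finite_cover_balls_of_compact (isCompact_univ (X := Fin (n+1) → X))
      (by positivity : 0 < ε/2)
  have hsel : ∀ x : X, ∃ y, y ∈ t ∧ F x ∈ Metric.ball y (ε/2) := by
    intro x
    have := htcov (Set.mem_univ (F x))
    simpa using this
  choose c hct hcball using hsel
  refine ⟨(htfin.toFinset.card : ℝ) * Real.exp ((n+1) * ‖φ‖), ?_⟩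
  rintro r ⟨E, hsep, rfl⟩
  have hterm : ∀ x ∈ E, Real.exp (∑ j ∈ Finset.range (n+1), φ (f^[j] x))
      ≤ Real.exp ((n+1) * ‖φ‖) := by
    intro x _
    apply Real.exp_le_exp.2
    calc ∑ j ∈ Finset.range (n+1), φ (f^[j] x)
        ≤ ∑ _j ∈ Finset.range (n+1), ‖φ‖ :=
          Finset.sum_le_sum fun j _ => le_trans (le_abs_self _) (φ.norm_coe_le_norm _)
      _ = (n+1) * ‖φ‖ := by
          rw [Finset.sum_const, Finset.card_range, nsmul_eq_mul]; push_cast; ring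
  have hcard : E.card ≤ htfin.toFinset.card := by
    apply Finset.card_le_card_of_injOn c
    · intro x _; exact htfin.mem_toFinset.2 (hct x)
    · intro x hx z hz hcxz
      by_contra hne
      obtain ⟨j, hj, hdist⟩ := hsep x hx z hz hne
      have h2 : ε ≤ dist (F x) (F z) := by
        refine le_trans hdist ?_
        have := dist_le_pi_dist (F x) (F z) ⟨j, Nat.lt_succ_of_le hj⟩
        simpa [F] using this
      have h1 : dist (F x) (F z) < ε := by
        have hx' : dist (F x) (c x) < ε/2 := Metric.mem_ball.1 (hcball x)
        have hz' : dist (F z) (c z) < ε/2 := Metric.mem_ball.1 (hcball z)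
        calc dist (F x) (F z) ≤ dist (F x) (c x) + dist (c z) (F z) := by
              rw [hcxz]; exact dist_triangle _ _ _
          _ < ε/2 + ε/2 := by rw [dist_comm (c z)]; exact add_lt_add hx' hz'
          _ = ε := by ring
      linarith
  calc ∑ x ∈ E, Real.exp (∑ j ∈ Finset.range (n+1), φ (f^[j] x))
      ≤ E.card • Real.exp ((n+1) * ‖φ‖) := Finset.sum_le_card_nsmul E _ _ hterm
    _ = (E.card : ℝ) * Real.exp ((n+1) * ‖φ‖) := nsmul_eq_mul _ _
    _ ≤ (htfin.toFinset.card : ℝ) * Real.exp ((n+1) * ‖φ‖) := by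
        gcongr


open Metric in
lemma integral_le_Ptop {X : Type*} [MetricSpace X] [CompactSpace X] [Nonempty X]
    [MeasurableSpace X] [BorelSpace X]
    (f : X → X) (hf : Continuous f) (ψ : C(X, ℝ)) (μ : ProbabilityMeasure X)
    (hμ : (μ : Measure X).map f = (μ : Measure X)) :
    ((∫ x, ψ x ∂(μ : Measure X) : ℝ) : EReal) ≤ Ptop f ψ := by
  have hint : ∀ g : X → ℝ, Continuous g → Integrable g (μ : Measure X) := by
    intro g hg
    have := (BoundedContinuousFunction.mkOfCompact (⟨g, hg⟩ : C(X, ℝ))).integrable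
      (μ : Measure X)
    exact this
  set I : ℝ := ∫ x, ψ x ∂(μ : Measure X) with hI
  -- iterated invariance
  have hiter : ∀ j : ℕ, (μ : Measure X).map (f^[j]) = (μ : Measure X) := by
    intro j
    induction j with
    | zero => simp
    | succ j ih =>
        rw [Function.iterate_succ',
          ← Measure.map_map hf.measurable (hf.measurable.iterate j), ih, hμ]
  -- Birkhoff sum function
  have hScont : ∀ n : ℕ, Continuous (fun x => ∑ j ∈ Finset.range (n+1), ψ (f^[j] x)) := by
    intro n
    exact continuous_finset_sum _ fun j _ => ψ.continuous.comp (hf.iterate j)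
  have hSint : ∀ n : ℕ, ∫ x, (∑ j ∈ Finset.range (n+1), ψ (f^[j] x)) ∂(μ : Measure X)
      = (n+1) * I := by
    intro n
    rw [integral_finset_sum]
    · have hj : ∀ j : ℕ, ∫ x, ψ (f^[j] x) ∂(μ : Measure X) = I := by
        intro j
        rw [hI]
        conv_rhs => rw [← hiter j]
        rw [integral_map (hf.measurable.iterate j).aemeasurable
          ψ.continuous.aestronglyMeasurable]
      simp only [hj, Finset.sum_const, Finset.card_range, nsmul_eq_mul]
      push_cast; ring
    · intro j _
      exact hint _ (ψ.continuous.comp (hf.iterate j))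
  -- pointwise maximizer
  have hmax : ∀ n : ℕ, (n+1 : ℝ) * I ≤ Real.log (dynPn f ψ n 1) := by
    intro n
    obtain ⟨x₀, -, hx₀⟩ := isCompact_univ.exists_isMaxOn Set.univ_nonempty
      (hScont n).continuousOn
    have hmean : (n+1 : ℝ) * I ≤ ∑ j ∈ Finset.range (n+1), ψ (f^[j] x₀) := by
      rw [← hSint n]
      calc ∫ x, (∑ j ∈ Finset.range (n+1), ψ (f^[j] x)) ∂(μ : Measure X)
          ≤ ∫ _x, (∑ j ∈ Finset.range (n+1), ψ (f^[j] x₀)) ∂(μ : Measure X) := by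
            apply integral_mono
            · exact hint _ (hScont n)
            · exact integrable_const _
            · intro x; exact hx₀ (Set.mem_univ x)
        _ = ∑ j ∈ Finset.range (n+1), ψ (f^[j] x₀) := by simp
    have hmem : Real.exp (∑ j ∈ Finset.range (n+1), ψ (f^[j] x₀)) ≤ dynPn f ψ n 1 := by
      apply le_csSup (dynPn_set_bddAbove f ψ n one_pos)
      refine ⟨{x₀}, ?_, by simp⟩
      intro x hx z hz hxz
      rw [Finset.mem_singleton] at hx hz
      exact absurd (hx.trans hz.symm) hxz
    calc (n+1 : ℝ) * I ≤ ∑ j ∈ Finset.range (n+1), ψ (f^[j] x₀) := hmean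
      _ = Real.log (Real.exp (∑ j ∈ Finset.range (n+1), ψ (f^[j] x₀))) :=
          (Real.log_exp _).symm
      _ ≤ Real.log (dynPn f ψ n 1) := Real.log_le_log (Real.exp_pos _) hmem
  -- pass to limsup
  refine le_trans ?_ (le_iSup_of_le ⟨1, one_pos⟩ le_rfl)
  have haux : Tendsto (fun n : ℕ => ((n : ℝ) + 1) * I / n) atTop (𝓝 I) := by
    have h1 : Tendsto (fun n : ℕ => (1 + 1 / (n : ℝ)) * I) atTop (𝓝 ((1 + 0) * I)) := by
      exact (Tendsto.add tendsto_const_nhds tendsto_one_div_atTop_nhds_zero_nat).mul_const I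
    rw [add_zero, one_mul] at h1
    refine h1.congr' ?_
    filter_upwards [eventually_gt_atTop 0] with n hn
    field_simp
  have haux' : Tendsto (fun n : ℕ => ((((n : ℝ) + 1) * I / n : ℝ) : EReal)) atTop
      (𝓝 (I : EReal)) := by
    exact (EReal.tendsto_coe).2 haux
  calc (I : EReal) = Filter.atTop.limsup (fun n : ℕ => ((((n : ℝ)+1) * I / n : ℝ) : EReal)) :=
        (haux'.limsup_eq).symm
    _ ≤ Filter.atTop.limsup
        (fun n : ℕ => ((Real.log (dynPn f ψ n (1 : ℝ)) / n : ℝ) : EReal)) := by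
        refine Filter.limsup_le_limsup ?_
        · filter_upwards [eventually_gt_atTop 0] with n hn
          apply EReal.coe_le_coe_iff.2
          exact (div_le_div_iff_of_pos_right (by exact_mod_cast hn : (0:ℝ) < n)).2 (hmax n)


/-- Let `f` be continuous with finite topological entropy, `φ ∈ C(X)`,
and for each `t > 0` let `ν_t` be an `f`-invariant equilibrium state for `tφ`
(`P_top(f,tφ) = 𝔥_{ν_t}(f) + t ∫ φ dν_t`). If `t_k → +∞` and `ν_{t_k} → ν_∞` weakly*
with `ν_∞` `f`-invariant, then (a) `∫ φ dν_∞ = max_{μ ∈ 𝒫_f(X)} ∫ φ dμ` and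
(b) `𝔥_{ν_{t_k}}(f) → 𝔥_{ν_∞}(f)`. -/
theorem zero_temperature_accumulation {X : Type*} [MetricSpace X] [CompactSpace X]
    [Nonempty X] [MeasurableSpace X] [BorelSpace X]
    (f : X → X) (hf : Continuous f) (htop : Ptop f 0 < ⊤) (φ : C(X, ℝ))
    (ν : ℝ → ProbabilityMeasure X)
    (hinv : ∀ t : ℝ, 0 < t → ((ν t : Measure X)).map f = (ν t : Measure X))
    (heq : ∀ t : ℝ, 0 < t →
      Ptop f (t • φ) = dynEnt f (ν t)
        + ((t * ∫ x, φ x ∂(ν t : Measure X) : ℝ) : EReal))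
    (ts : ℕ → ℝ) (hts : Tendsto ts atTop atTop)
    (νlim : ProbabilityMeasure X)
    (hνliminv : ((νlim : Measure X)).map f = (νlim : Measure X))
    (hconv : Tendsto (fun k : ℕ => ν (ts k)) atTop (𝓝 νlim)) :
    (∀ μ : ProbabilityMeasure X, (μ : Measure X).map f = (μ : Measure X) →
        ∫ x, φ x ∂(μ : Measure X) ≤ ∫ x, φ x ∂(νlim : Measure X)) ∧
    Tendsto (fun k : ℕ => dynEnt f (ν (ts k))) atTop (𝓝 (dynEnt f νlim)) := by
  -- integrals converge
  have hitend : ∀ ψ : C(X, ℝ), Tendsto (fun k => ∫ x, ψ x ∂(ν (ts k) : Measure X))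
      atTop (𝓝 (∫ x, ψ x ∂(νlim : Measure X))) := by
    intro ψ
    have := (ProbabilityMeasure.tendsto_iff_forall_integral_tendsto.1 hconv)
      (BoundedContinuousFunction.mkOfCompact ψ)
    simpa using this
  -- basic bounds on dynEnt for invariant measures
  have hEnt_nonneg : ∀ μ : ProbabilityMeasure X,
      (μ : Measure X).map f = (μ : Measure X) → (0 : EReal) ≤ dynEnt f μ := by
    intro μ hμ
    refine le_iInf fun ψ => ?_
    have h1 := integral_le_Ptop f hf ψ μ hμ
    set c : ℝ := ∫ x, ψ x ∂(μ : Measure X)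
    rcases eq_or_ne (Ptop f ψ) ⊤ with h | h
    · rw [h, EReal.top_sub_coe]; exact le_top
    · have hne : Ptop f ψ ≠ ⊥ := fun hb => by simp [hb] at h1
      rw [← EReal.coe_toReal h hne, ← EReal.coe_sub]
      have : c ≤ (Ptop f ψ).toReal := by
        have := EReal.toReal_le_toReal h1 (EReal.coe_ne_bot c) h
        simpa using this
      exact_mod_cast sub_nonneg.2 this
  have hEnt_le : ∀ μ : ProbabilityMeasure X, dynEnt f μ ≤ Ptop f 0 := by
    intro μ
    refine le_trans (iInf_le _ 0) ?_
    have : ∫ x, (0 : C(X, ℝ)) x ∂(μ : Measure X) = 0 := by simp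
    rw [this]
    simp
  -- Ptop f 0 is a finite nonnegative real
  have hH0 : (0 : EReal) ≤ Ptop f 0 := by
    have := integral_le_Ptop f hf 0 νlim hνliminv
    simpa using this
  have hHbot : Ptop f 0 ≠ ⊥ := fun hb => by simp [hb] at hH0
  set h : ℝ := (Ptop f 0).toReal with hh
  have hHr : Ptop f 0 = (h : EReal) := (EReal.coe_toReal htop.ne hHbot).symm
  -- dynEnt of invariant measures as reals
  have hEntReal : ∀ μ : ProbabilityMeasure X, (μ : Measure X).map f = (μ : Measure X) →
      dynEnt f μ = ((dynEnt f μ).toReal : EReal) := by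
    intro μ hμ
    refine (EReal.coe_toReal ?_ ?_).symm
    · exact ne_top_of_le_ne_top htop.ne (hEnt_le μ)
    · exact fun hb => by simpa [hb] using hEnt_nonneg μ hμ
  have hEntReal_le : ∀ μ : ProbabilityMeasure X, (μ : Measure X).map f = (μ : Measure X) →
      (dynEnt f μ).toReal ≤ h := by
    intro μ hμ
    refine EReal.toReal_le_toReal (hEnt_le μ) ?_ htop.ne
    exact fun hb => by simpa [hb] using hEnt_nonneg μ hμ
  -- eventually positive times
  have hpos : ∀ᶠ k in atTop, 0 < ts k := hts.eventually_gt_atTop 0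
  -- the key inequality from the equilibrium property
  have hkey : ∀ μ : ProbabilityMeasure X, (μ : Measure X).map f = (μ : Measure X) →
      ∀ t : ℝ, 0 < t →
      dynEnt f μ ≤ dynEnt f (ν t)
        + ((t * ∫ x, φ x ∂(ν t : Measure X) - t * ∫ x, φ x ∂(μ : Measure X) : ℝ) : EReal) := by
    intro μ hμ t ht
    have h1 : dynEnt f μ ≤ Ptop f (t • φ)
        - ((∫ x, (t • φ) x ∂(μ : Measure X) : ℝ) : EReal) := iInf_le _ (t • φ)
    have h2 : ∫ x, (t • φ) x ∂(μ : Measure X) = t * ∫ x, φ x ∂(μ : Measure X) := by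
      simp only [ContinuousMap.coe_smul, Pi.smul_apply, smul_eq_mul]
      exact integral_const_mul t _
    rw [h2, heq t ht] at h1
    refine h1.trans_eq ?_
    rw [hEntReal (ν t) (hinv t ht)]
    rw [← EReal.coe_add, ← EReal.coe_sub, ← EReal.coe_add]
    congr 1
    ring
  -- part (a)
  have ha : ∀ μ : ProbabilityMeasure X, (μ : Measure X).map f = (μ : Measure X) →
      ∫ x, φ x ∂(μ : Measure X) ≤ ∫ x, φ x ∂(νlim : Measure X) := by
    intro μ hμ
    have hstep : ∀ᶠ k in atTop, ∫ x, φ x ∂(μ : Measure X)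
        ≤ ∫ x, φ x ∂(ν (ts k) : Measure X) + h * (ts k)⁻¹ := by
      filter_upwards [hpos] with k hk
      set t := ts k
      have h1 := hkey μ hμ t hk
      have h0 := hEnt_nonneg μ hμ
      have h2 : (0 : EReal) ≤ ((dynEnt f (ν t)).toReal
          + (t * ∫ x, φ x ∂(ν t : Measure X) - t * ∫ x, φ x ∂(μ : Measure X)) : ℝ) := by
        refine le_trans h0 (h1.trans_eq ?_)
        rw [hEntReal (ν t) (hinv t hk), ← EReal.coe_add]
        simp
      rw [EReal.coe_nonneg] at h2
      have h3 : (dynEnt f (ν t)).toReal ≤ h := hEntReal_le (ν t) (hinv t hk)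
      have h4 : t * ∫ x, φ x ∂(μ : Measure X) - t * ∫ x, φ x ∂(ν t : Measure X) ≤ h := by
        linarith
      have h5 : ∫ x, φ x ∂(μ : Measure X) - ∫ x, φ x ∂(ν t : Measure X) ≤ h / t := by
        rw [le_div_iff₀ hk]
        calc (∫ x, φ x ∂(μ : Measure X) - ∫ x, φ x ∂(ν t : Measure X)) * t
            = t * ∫ x, φ x ∂(μ : Measure X) - t * ∫ x, φ x ∂(ν t : Measure X) := by ring
          _ ≤ h := h4
      rw [div_eq_mul_inv] at h5
      linarith
    have hlim : Tendsto (fun k => ∫ x, φ x ∂(ν (ts k) : Measure X) + h * (ts k)⁻¹)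
        atTop (𝓝 (∫ x, φ x ∂(νlim : Measure X) + h * 0)) := by
      exact (hitend φ).add (tendsto_const_nhds.mul hts.inv_tendsto_atTop)
    rw [mul_zero, add_zero] at hlim
    exact ge_of_tendsto hlim hstep
  refine ⟨ha, ?_⟩
  -- liminf bound : eventually dynEnt f νlim ≤ dynEnt f (ν (ts k))
  have hlow : ∀ᶠ k in atTop, dynEnt f νlim ≤ dynEnt f (ν (ts k)) := by
    filter_upwards [hpos] with k hk
    set t := ts k
    have h1 := hkey νlim hνliminv t hk
    refine h1.trans ?_
    rw [hEntReal (ν t) (hinv t hk), ← EReal.coe_add]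
    apply EReal.coe_le_coe_iff.2
    have h2 : ∫ x, φ x ∂(ν t : Measure X) ≤ ∫ x, φ x ∂(νlim : Measure X) :=
      ha (ν t) (hinv t hk)
    nlinarith [hk, h2]
  -- limsup bound
  have hup : Filter.atTop.limsup (fun k => dynEnt f (ν (ts k))) ≤ dynEnt f νlim := by
    refine le_iInf fun ψ => ?_
    rcases eq_or_ne (Ptop f ψ) ⊤ with hT | hT
    · rw [hT, EReal.top_sub_coe]; exact le_top
    · have hne : Ptop f ψ ≠ ⊥ := by
        have h1 := integral_le_Ptop f hf ψ νlim hνliminv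
        exact fun hb => by simp [hb] at h1
      set p : ℝ := (Ptop f ψ).toReal with hp
      have hPr : Ptop f ψ = (p : EReal) := (EReal.coe_toReal hT hne).symm
      have hle : ∀ k, dynEnt f (ν (ts k))
          ≤ ((p - ∫ x, ψ x ∂(ν (ts k) : Measure X) : ℝ) : EReal) := by
        intro k
        refine le_trans (iInf_le _ ψ) ?_
        rw [hPr, ← EReal.coe_sub]
      have htend : Tendsto (fun k => ((p - ∫ x, ψ x ∂(ν (ts k) : Measure X) : ℝ) : EReal))
          atTop (𝓝 ((p - ∫ x, ψ x ∂(νlim : Measure X) : ℝ) : EReal)) :=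
        EReal.tendsto_coe.2 (tendsto_const_nhds.sub (hitend ψ))
      calc Filter.atTop.limsup (fun k => dynEnt f (ν (ts k)))
          ≤ Filter.atTop.limsup
              (fun k => ((p - ∫ x, ψ x ∂(ν (ts k) : Measure X) : ℝ) : EReal)) :=
            Filter.limsup_le_limsup (Eventually.of_forall hle)
        _ = ((p - ∫ x, ψ x ∂(νlim : Measure X) : ℝ) : EReal) := htend.limsup_eq
        _ = Ptop f ψ - ((∫ x, ψ x ∂(νlim : Measure X) : ℝ) : EReal) := by
            rw [hPr, ← EReal.coe_sub]
  have hlow' : dynEnt f νlim ≤ Filter.atTop.liminf (fun k => dynEnt f (ν (ts k))) :=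
    le_liminf_of_le (by isBoundedDefault) hlow
  exact tendsto_of_le_liminf_of_limsup_le hlow' hup
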